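/- Let (X,A,μ,T) be an ergodic probability-preserving system, (E_k)_{k≥1} a sequence of asymptotically rare events, Y ∈ A of positive measure, and (E'_k)_{k≥1} a sequence of measurable subsets of Y such that, for every k ≥ 1, points of Y can only reach E_k via E'_k. If there exists a constant M ≥ 0 such that E'_k ⊆ ∪_{m=0}^{M} T^{-m}E_k for all k ≥ 1, then (E'_k) is asymptotically rare and μ(E'_k)·(φ_{E_k} − φ_{E'_k}) → 0 in μ_Y-measure as k → ∞. -/

import Mathlib

set_option maxHeartbeats 1000000

open MeasureTheory Filter Set Topology
open scoped ENNReal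

/-- First hitting time `φ_E` (values in `ℝ≥0∞`; `∞` if the orbit never hits `E`). -/
noncomputable def hitTime {X : Type*} (T : X → X) (E : Set X) (x : X) : ℝ≥0∞ :=
  sInf {t : ℝ≥0∞ | ∃ n : ℕ, 1 ≤ n ∧ T^[n] x ∈ E ∧ t = (n : ℝ≥0∞)}

/-- First hitting time, `ℕ`-valued (junk value `0` if the orbit never hits `E`). -/
noncomputable def hitN {X : Type*} (T : X → X) (E : Set X) (x : X) : ℕ :=
  sInf {n : ℕ | 1 ≤ n ∧ T^[n] x ∈ E}

/-- First return map `T_Y`. -/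
noncomputable def returnMap {X : Type*} (T : X → X) (Y : Set X) (x : X) : X :=
  T^[hitN T Y x] x

/-- Normalized restriction `μ_Y = μ(Y)⁻¹ μ(Y ∩ ·)`. -/
noncomputable def condMeas {X : Type*} [MeasurableSpace X] (μ : Measure X) (Y : Set X) :
    Measure X := (μ Y)⁻¹ • μ.restrict Y

/-- Convergence in distribution, at continuity points of the limit distribution function,
of `[0,∞]`-valued random variables `f k` on `(X, ν)` to a random variable `R` on `(Ω, P)`. -/
def TendstoInDistrib {X Ω : Type*} [MeasurableSpace X] [MeasurableSpace Ω]
    (ν : Measure X) (f : ℕ → X → ℝ≥0∞) (P : Measure Ω) (R : Ω → ℝ≥0∞) : Prop :=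
  ∀ t : ℝ, ContinuousAt (fun s : ℝ => (P {ω | R ω ≤ ENNReal.ofReal s}).toReal) t →
    Tendsto (fun k => (ν {x | f k x ≤ ENNReal.ofReal t}).toReal) atTop
      (𝓝 ((P {ω | R ω ≤ ENNReal.ofReal t}).toReal))

/-- `f k → ∞` in `ν`-measure. -/
def TendstoInfInMeasure {X : Type*} [MeasurableSpace X] (ν : Measure X)
    (f : ℕ → X → ℝ≥0∞) : Prop :=
  ∀ N : ℕ, 1 ≤ N → Tendsto (fun k => ν {x | f k x ≤ (N : ℝ≥0∞)}) atTop (𝓝 0)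

/-- Points of `Y` can only reach `E` via `E'`. -/
def OnlyReachVia {X : Type*} [MeasurableSpace X] (μ : Measure X) (T : X → X)
    (Y E E' : Set X) : Prop :=
  ∀ n : ℕ, ∀ᵐ x ∂μ.restrict Y, T^[n] x ∈ E → ∃ j ≤ n, T^[j] x ∈ E'

lemma hitTime_le' {X : Type*} {T : X → X} {E : Set X} {x : X} {n : ℕ}
    (hn : 1 ≤ n) (hx : T^[n] x ∈ E) : hitTime T E x ≤ n :=
  sInf_le ⟨n, hn, hx, rfl⟩

lemma hitTime_spec' {X : Type*} {T : X → X} {E : Set X} {x : X}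
    (h : hitTime T E x ≠ ⊤) :
    ∃ m : ℕ, 1 ≤ m ∧ T^[m] x ∈ E ∧ hitTime T E x = m := by
  have hne : {n : ℕ | 1 ≤ n ∧ T^[n] x ∈ E}.Nonempty := by
    by_contra hc
    apply h
    have he : {t : ℝ≥0∞ | ∃ n : ℕ, 1 ≤ n ∧ T^[n] x ∈ E ∧ t = (n : ℝ≥0∞)} = ∅ := by
      ext t
      simp only [mem_setOf_eq, mem_empty_iff_false, iff_false]
      rintro ⟨n, h1, h2, rfl⟩
      exact hc ⟨n, h1, h2⟩
    simp [hitTime, he]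
  obtain ⟨h1, h2⟩ := Nat.sInf_mem hne
  refine ⟨sInf {n : ℕ | 1 ≤ n ∧ T^[n] x ∈ E}, h1, h2, ?_⟩
  refine le_antisymm (hitTime_le' h1 h2) (le_sInf ?_)
  rintro t ⟨n, hn1, hn2, rfl⟩
  have hle : sInf {n : ℕ | 1 ≤ n ∧ T^[n] x ∈ E} ≤ n := Nat.sInf_le ⟨hn1, hn2⟩
  exact_mod_cast hle

theorem stmt5 {X : Type*} [MeasurableSpace X]
    (μ : Measure X) [IsProbabilityMeasure μ] (T : X → X) (hT : Ergodic T μ)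
    (E : ℕ → Set X) (hEm : ∀ k, MeasurableSet (E k))
    (hEpos : ∀ k, 0 < μ (E k)) (hErare : Tendsto (fun k => μ (E k)) atTop (𝓝 0))
    (Y : Set X) (hYm : MeasurableSet Y) (hYpos : 0 < μ Y)
    (E' : ℕ → Set X) (hE'm : ∀ k, MeasurableSet (E' k)) (hE'Y : ∀ k, E' k ⊆ Y)
    (honly : ∀ k, OnlyReachVia μ T Y (E k) (E' k))
    (M : ℕ) (hM : ∀ k, E' k ⊆ ⋃ m ∈ Finset.range (M + 1), T^[m] ⁻¹' (E k)) :
    ((∀ k, 0 < μ (E' k)) ∧ Tendsto (fun k => μ (E' k)) atTop (𝓝 0)) ∧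
      (∀ ε : ℝ≥0∞, 0 < ε →
        Tendsto (fun k => condMeas μ Y
          {x | ε ≤ μ (E' k) * ((hitTime T (E k) x - hitTime T (E' k) x) +
                (hitTime T (E' k) x - hitTime T (E k) x))}) atTop (𝓝 0)) := by
  have hTm : Measurable T := hT.toMeasurePreserving.measurable
  have hpreim : ∀ (S : Set X), MeasurableSet S → ∀ m : ℕ, μ (T^[m] ⁻¹' S) = μ S :=
    fun S hS m => (hT.toMeasurePreserving.iterate m).measure_preimage hS.nullMeasurableSet
  -- rarity of E'
  have hrare' : Tendsto (fun k => μ (E' k)) atTop (𝓝 0) := by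
    have hub : ∀ k, μ (E' k) ≤ ((M + 1 : ℕ) : ℝ≥0∞) * μ (E k) := by
      intro k
      calc μ (E' k) ≤ μ (⋃ m ∈ Finset.range (M + 1), T^[m] ⁻¹' (E k)) :=
            measure_mono (hM k)
        _ ≤ ∑ m ∈ Finset.range (M + 1), μ (T^[m] ⁻¹' (E k)) :=
            measure_biUnion_finset_le _ _
        _ = ∑ m ∈ Finset.range (M + 1), μ (E k) := by
            refine Finset.sum_congr rfl fun m _ => hpreim _ (hEm k) m
        _ = ((M + 1 : ℕ) : ℝ≥0∞) * μ (E k) := by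
            simp [Finset.sum_const, Finset.card_range, nsmul_eq_mul]
    have hlim : Tendsto (fun k => ((M + 1 : ℕ) : ℝ≥0∞) * μ (E k)) atTop (𝓝 0) := by
      have := ENNReal.Tendsto.const_mul (a := ((M + 1 : ℕ) : ℝ≥0∞)) hErare
        (Or.inr (ENNReal.natCast_ne_top _))
      simpa using this
    exact tendsto_of_tendsto_of_tendsto_of_le_of_le tendsto_const_nhds hlim
      (fun k => zero_le) hub
  -- positivity of E'
  have hpos' : ∀ k, 0 < μ (E' k) := by
    intro k
    rw [pos_iff_ne_zero]
    intro h0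
    set B := ⋃ n : ℕ, T^[n] ⁻¹' (E k) with hB
    have hBm : MeasurableSet B := MeasurableSet.iUnion fun n => (hTm.iterate n) (hEm k)
    have hsub : T ⁻¹' B ⊆ B := by
      rintro x hx
      simp only [hB, mem_iUnion, mem_preimage] at hx ⊢
      obtain ⟨n, hn⟩ := hx
      exact ⟨n + 1, by rwa [Function.iterate_succ_apply]⟩
    have hle : μ (E k) ≤ μ B :=
      measure_mono (fun x hx => mem_iUnion.2 ⟨0, hx⟩)
    rcases hT.ae_empty_or_univ_of_preimage_ae_le hBm.nullMeasurableSet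
        hsub.eventuallyLE with h | h
    · rw [measure_congr h, measure_empty] at hle
      exact absurd (le_antisymm hle zero_le) (hEpos k).ne'
    have hB1 : μ B = 1 := by rw [measure_congr h, measure_univ]
    have hC0 : μ (⋃ j : ℕ, T^[j] ⁻¹' (E' k)) = 0 :=
      measure_iUnion_null fun j => by rw [hpreim _ (hE'm k) j]; exact h0
    have haeB : ∀ᵐ x ∂μ.restrict Y, x ∈ B := by
      refine ae_restrict_of_ae ?_
      rw [ae_iff]
      have : {x | ¬ x ∈ B} = Bᶜ := rfl
      rw [this]
      rw [measure_compl hBm (measure_ne_top μ B), hB1, measure_univ, tsub_self]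
    have haeC : ∀ᵐ x ∂μ.restrict Y, x ∉ (⋃ j : ℕ, T^[j] ⁻¹' (E' k)) := by
      refine ae_restrict_of_ae ?_
      exact measure_eq_zero_iff_ae_notMem.1 hC0
    have hfalse : ∀ᵐ _ ∂μ.restrict Y, False := by
      filter_upwards [haeB, haeC, ae_all_iff.2 (honly k)] with x hxB hxC hxonly
      obtain ⟨n, hn⟩ := mem_iUnion.1 hxB
      obtain ⟨j, _, hj⟩ := hxonly n hn
      exact hxC (mem_iUnion.2 ⟨j, hj⟩)
    rw [ae_iff] at hfalse
    simp only [not_false_iff, setOf_true] at hfalse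
    rw [Measure.restrict_apply_univ] at hfalse
    exact hYpos.ne' hfalse
  refine ⟨⟨hpos', hrare'⟩, ?_⟩
  intro ε hε
  -- deterministic bound on the first difference
  have hd1 : ∀ k x, hitTime T (E k) x - hitTime T (E' k) x ≤ (M : ℝ≥0∞) := by
    intro k x
    by_cases htop : hitTime T (E' k) x = ⊤
    · simp [htop]
    obtain ⟨j, hj1, hjE', hjeq⟩ := hitTime_spec' htop
    obtain ⟨m, hm, hmE⟩ : ∃ m, m < M + 1 ∧ T^[m] (T^[j] x) ∈ E k := by
      have := hM k hjE'
      simpa [Finset.mem_range] using this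
    have hjm : T^[m + j] x ∈ E k := by
      rw [Function.iterate_add_apply]; exact hmE
    have hle : hitTime T (E k) x ≤ ((m + j : ℕ) : ℝ≥0∞) :=
      hitTime_le' (le_trans hj1 (Nat.le_add_left j m)) hjm
    rw [tsub_le_iff_right, hjeq]
    calc hitTime T (E k) x ≤ ((m + j : ℕ) : ℝ≥0∞) := hle
      _ ≤ (M : ℝ≥0∞) + (j : ℝ≥0∞) := by
          push_cast
          exact add_le_add_left (by exact_mod_cast Nat.lt_succ_iff.1 hm) _
  -- a.e. on Y, if the second difference is positive then x ∈ E' k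
  have hae2 : ∀ k, ∀ᵐ x ∂μ.restrict Y,
      0 < hitTime T (E' k) x - hitTime T (E k) x → x ∈ E' k := by
    intro k
    filter_upwards [ae_all_iff.2 (honly k)] with x hx hpos
    by_cases htop : hitTime T (E k) x = ⊤
    · rw [htop] at hpos; simp at hpos
    obtain ⟨n, hn1, hnE, hneq⟩ := hitTime_spec' htop
    obtain ⟨j, hjn, hjE'⟩ := hx n hnE
    rcases Nat.eq_zero_or_pos j with rfl | hj
    · simpa using hjE'
    · exfalso
      have hle : hitTime T (E' k) x ≤ hitTime T (E k) x := by
        rw [hneq]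
        exact le_trans (hitTime_le' hj hjE') (by exact_mod_cast hjn)
      rw [tsub_eq_zero_of_le hle] at hpos
      exact lt_irrefl _ hpos
  -- eventually μ(E' k) * M < ε
  have hsmall : ∀ᶠ k in atTop, μ (E' k) * (M : ℝ≥0∞) < ε := by
    have : Tendsto (fun k => μ (E' k) * (M : ℝ≥0∞)) atTop (𝓝 0) := by
      simpa using ENNReal.Tendsto.mul_const hrare' (Or.inr (ENNReal.natCast_ne_top M))
    exact this.eventually (gt_mem_nhds hε)
  have hupper : Tendsto (fun k => (μ Y)⁻¹ * μ (E' k)) atTop (𝓝 0) := by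
    simpa using ENNReal.Tendsto.const_mul hrare'
      (Or.inr (ENNReal.inv_ne_top.2 hYpos.ne'))
  refine tendsto_of_tendsto_of_tendsto_of_le_of_le' tendsto_const_nhds hupper
    (Eventually.of_forall fun k => zero_le) ?_
  filter_upwards [hsmall] with k hk
  have hsubset : {x | ε ≤ μ (E' k) * ((hitTime T (E k) x - hitTime T (E' k) x) +
      (hitTime T (E' k) x - hitTime T (E k) x))} ≤ᵐ[μ.restrict Y] E' k := by
    filter_upwards [hae2 k] with x hx hxmem
    apply hx
    by_contra hnot
    push_neg at hnot
    have hd2 : hitTime T (E' k) x - hitTime T (E k) x = 0 :=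
      le_antisymm hnot zero_le
    have : ε ≤ μ (E' k) * (M : ℝ≥0∞) := by
      refine le_trans hxmem (mul_le_mul_right ?_ _)
      rw [hd2, add_zero]
      exact hd1 k x
    exact hk.not_ge this
  calc condMeas μ Y {x | ε ≤ μ (E' k) * ((hitTime T (E k) x - hitTime T (E' k) x) +
        (hitTime T (E' k) x - hitTime T (E k) x))}
      = (μ Y)⁻¹ * μ.restrict Y {x | ε ≤ μ (E' k) *
          ((hitTime T (E k) x - hitTime T (E' k) x) +
          (hitTime T (E' k) x - hitTime T (E k) x))} := by
        simp [condMeas]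
    _ ≤ (μ Y)⁻¹ * μ.restrict Y (E' k) := mul_le_mul_right (measure_mono_ae hsubset) _
    _ ≤ (μ Y)⁻¹ * μ (E' k) := by
        refine mul_le_mul_right ?_ _
        rw [Measure.restrict_apply (hE'm k)]
        exact measure_mono inter_subset_left
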